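/- Let R = [[-1/2, √3/2], [-√3/2, -1/2]] and τ = exp(2πi/3). Let A : ℝ² → M₂(ℂ) be measurable with A(R⁻¹x) = R⁻¹ A(x) R for all x ∈ ℝ², and let E ⊆ ℝ² be a measurable set with R⁻¹(E) = E. Let w : ℝ² → ℂ be differentiable with w(R⁻¹x) = τ·w(x) for all x ∈ ℝ² (or with w(R⁻¹x) = conj(τ)·w(x) for all x). Assume that the ℂ²-valued function x ↦ conj(w(x))·(A(x) ∇w(x)) is integrable on E. Then ∫_E conj(w(x))·(A(x) ∇w(x)) dx = 0 in ℂ². -/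

import Mathlib

open Complex ComplexConjugate MeasureTheory

/-- The clockwise rotation by `2π/3`: `R = [[-1/2, √3/2],[-√3/2, -1/2]]`. -/
noncomputable def Rm : Matrix (Fin 2) (Fin 2) ℝ :=
  !![-(1/2), Real.sqrt 3 / 2; -(Real.sqrt 3) / 2, -(1/2)]

/-- `R` regarded as a complex matrix. -/
noncomputable def Rc : Matrix (Fin 2) (Fin 2) ℂ := Rm.map Complex.ofReal

/-- `τ = exp(2πi/3)`. -/
noncomputable def τ : ℂ := Complex.exp (2 * Real.pi * Complex.I / 3)

/-- The gradient of a function `w : ℝ² → ℂ`: the vector of its partial derivatives at `x`. -/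
noncomputable def grad (w : (Fin 2 → ℝ) → ℂ) (x : Fin 2 → ℝ) : Fin 2 → ℂ :=
  fun i => fderiv ℝ w x (Pi.single i 1)

lemma sqrt3_sq : Real.sqrt 3 * Real.sqrt 3 = 3 :=
  Real.mul_self_sqrt (by norm_num)

lemma Rm_det : Rm.det = 1 := by
  simp [Rm, Matrix.det_fin_two_of]
  nlinarith [sqrt3_sq]

lemma Rm_inv : Rm⁻¹ = !![-(1/2), -(Real.sqrt 3)/2; Real.sqrt 3/2, -(1/2)] := by
  apply Matrix.inv_eq_right_inv
  ext i j
  fin_cases i <;> fin_cases j <;>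
    simp [Rm, Matrix.mul_apply, Fin.sum_univ_two, Matrix.one_apply] <;>
    nlinarith [sqrt3_sq]

lemma Rm_mul_inv : Rm * Rm⁻¹ = 1 :=
  Matrix.mul_nonsing_inv _ (by rw [Rm_det]; exact isUnit_one)

lemma Rm_inv_mul : Rm⁻¹ * Rm = 1 :=
  Matrix.nonsing_inv_mul _ (by rw [Rm_det]; exact isUnit_one)

lemma Rm_inv_apply (i j : Fin 2) : Rm⁻¹ j i = Rm i j := by
  rw [Rm_inv]
  fin_cases i <;> fin_cases j <;> simp [Rm] <;> ring

lemma Rc_det : Rc.det = 1 := by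
  have h3 : ((Real.sqrt 3 : ℝ) : ℂ) * ((Real.sqrt 3 : ℝ) : ℂ) = 3 := by
    rw [← Complex.ofReal_mul, sqrt3_sq]; norm_num
  simp only [Rc, Rm, Matrix.det_fin_two, Matrix.map_apply]
  norm_num [Matrix.cons_val_zero, Matrix.cons_val_one]
  push_cast
  linear_combination (1/4 : ℂ) * h3

lemma Rc_inv : Rc⁻¹ = Rm⁻¹.map Complex.ofReal := by
  apply Matrix.inv_eq_right_inv
  show Rm.map Complex.ofRealHom * Rm⁻¹.map Complex.ofRealHom = 1
  rw [← Matrix.map_mul, Rm_mul_inv, Matrix.map_one] <;> simp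

lemma Rc_mul_inv : Rc * Rc⁻¹ = 1 :=
  Matrix.mul_nonsing_inv _ (by rw [Rc_det]; exact isUnit_one)

lemma Rc_inv_mul : Rc⁻¹ * Rc = 1 :=
  Matrix.nonsing_inv_mul _ (by rw [Rc_det]; exact isUnit_one)

lemma tau_conj_mul : (starRingEnd ℂ) τ * τ = 1 := by
  rw [τ, ← Complex.exp_conj, ← Complex.exp_add]
  have : (starRingEnd ℂ) (2 * ↑Real.pi * Complex.I / 3) + 2 * ↑Real.pi * Complex.I / 3 = 0 := by
    have : ((2 : ℂ) * ↑Real.pi * Complex.I / 3) = (↑(2 * Real.pi / 3) : ℝ) * Complex.I := by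
      push_cast; ring
    rw [this, map_mul, Complex.conj_ofReal, Complex.conj_I]
    ring
  rw [this, Complex.exp_zero]

noncomputable def Lf : (Fin 2 → ℝ) →L[ℝ] (Fin 2 → ℝ) :=
  LinearMap.toContinuousLinearMap (Matrix.mulVecLin Rm⁻¹)

lemma Lf_apply (x : Fin 2 → ℝ) : Lf x = Rm⁻¹.mulVec x := rfl

lemma clm_expand (L : (Fin 2 → ℝ) →L[ℝ] ℂ) (v : Fin 2 → ℝ) :
    L v = (v 0 : ℂ) * L (Pi.single 0 1) + (v 1 : ℂ) * L (Pi.single 1 1) := by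
  have hv : v = v 0 • (Pi.single 0 1 : Fin 2 → ℝ) + v 1 • (Pi.single 1 1 : Fin 2 → ℝ) := by
    funext j; fin_cases j <;> simp
  rw [hv]
  simp [_root_.map_add, _root_.map_smul, Complex.real_smul]

lemma grad_comp (w : (Fin 2 → ℝ) → ℂ) (hw : Differentiable ℝ w) (x : Fin 2 → ℝ) :
    grad (fun y => w (Rm⁻¹.mulVec y)) x = Rc.mulVec (grad w (Rm⁻¹.mulVec x)) := by
  funext i
  have hfd : fderiv ℝ (w ∘ Lf) x = (fderiv ℝ w (Lf x)).comp Lf :=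
    by rw [fderiv_comp x (hw.differentiableAt) Lf.differentiableAt, Lf.fderiv]
  have key : grad (fun y => w (Rm⁻¹.mulVec y)) x i
      = fderiv ℝ w (Rm⁻¹.mulVec x) (Rm⁻¹.mulVec (Pi.single i 1)) := by
    show fderiv ℝ (w ∘ Lf) x (Pi.single i 1) = _
    rw [hfd]; rfl
  rw [key, clm_expand]
  have h0 : Rm⁻¹.mulVec (Pi.single i 1) 0 = Rm i 0 := by
    simp [Matrix.mulVec_single, Rm_inv_apply]
  have h1 : Rm⁻¹.mulVec (Pi.single i 1) 1 = Rm i 1 := by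
    simp [Matrix.mulVec_single, Rm_inv_apply]
  rw [h0, h1]
  simp [Rc, Matrix.mulVec, dotProduct, Fin.sum_univ_two, grad]

lemma grad_const_mul (μ : ℂ) (w : (Fin 2 → ℝ) → ℂ) (hw : Differentiable ℝ w)
    (x : Fin 2 → ℝ) : grad (fun y => μ * w y) x = μ • grad w x := by
  funext i
  show fderiv ℝ (fun y => μ * w y) x (Pi.single i 1) = μ * grad w x i
  have : (fun y => μ * w y) = (fun y => μ • w y) := by funext y; rw [smul_eq_mul]
  rw [this, fderiv_fun_const_smul hw.differentiableAt μ]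
  simp [grad]

lemma mulVec_cont (M : Matrix (Fin 2) (Fin 2) ℝ) :
    Continuous (fun x : Fin 2 → ℝ => M.mulVec x) :=
  LinearMap.continuous_on_pi (Matrix.mulVecLin M)

noncomputable def eqv : (Fin 2 → ℝ) ≃ᵐ (Fin 2 → ℝ) where
  toEquiv :=
  { toFun := fun x => Rm⁻¹.mulVec x
    invFun := fun x => Rm.mulVec x
    left_inv := fun x => by
      show Rm.mulVec (Rm⁻¹.mulVec x) = x
      rw [Matrix.mulVec_mulVec, Rm_mul_inv, Matrix.one_mulVec]
    right_inv := fun x => by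
      show Rm⁻¹.mulVec (Rm.mulVec x) = x
      rw [Matrix.mulVec_mulVec, Rm_inv_mul, Matrix.one_mulVec] }
  measurable_toFun := (mulVec_cont _).measurable
  measurable_invFun := (mulVec_cont _).measurable

lemma mp : MeasurePreserving (fun x : Fin 2 → ℝ => Rm⁻¹.mulVec x) volume volume := by
  have hdet : Rm⁻¹.det ≠ 0 := by
    rw [Matrix.det_nonsing_inv, Rm_det]; simp
  refine ⟨(mulVec_cont _).measurable, ?_⟩
  have h := Real.map_matrix_volume_pi_eq_smul_volume_pi hdet
  have hdet1 : Rm⁻¹.det = 1 := by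
    rw [Matrix.det_nonsing_inv, Rm_det]; simp
  have hfun : ⇑(Matrix.toLin' Rm⁻¹) = fun x : Fin 2 → ℝ => Rm⁻¹.mulVec x := by
    funext x; exact Matrix.toLin'_apply _ _
  rw [hfun, hdet1] at h
  simpa using h

/-- under rotational invariance of `A` and of `E`, and a rotation
eigenvalue `τ` or `conj τ` for `w`, the ℂ²-valued integral
`∫_E conj(w(x))·(A(x)∇w(x)) dx` vanishes. -/
theorem statement8 (A : (Fin 2 → ℝ) → Matrix (Fin 2) (Fin 2) ℂ)
    (hAmeas : ∀ k l, Measurable fun x => A x k l)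
    (hAsym : ∀ x, A (Rm⁻¹.mulVec x) = Rc⁻¹ * A x * Rc)
    (E : Set (Fin 2 → ℝ)) (hE : MeasurableSet E) (hER : Rm.mulVec ⁻¹' E = E)
    (w : (Fin 2 → ℝ) → ℂ) (hw : Differentiable ℝ w)
    (hwR : (∀ x, w (Rm⁻¹.mulVec x) = τ * w x)
        ∨ (∀ x, w (Rm⁻¹.mulVec x) = (starRingEnd ℂ) τ * w x))
    (hint : IntegrableOn (fun x => conj (w x) • (A x).mulVec (grad w x)) E) :
    (∫ x in E, conj (w x) • (A x).mulVec (grad w x)) = (0 : Fin 2 → ℂ) := by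
  set F : (Fin 2 → ℝ) → (Fin 2 → ℂ) := fun x => conj (w x) • (A x).mulVec (grad w x) with hF
  obtain ⟨μ, hμ, hwμ⟩ : ∃ μ : ℂ, (starRingEnd ℂ) μ * μ = 1 ∧
      ∀ x, w (Rm⁻¹.mulVec x) = μ * w x := by
    rcases hwR with h | h
    · exact ⟨τ, tau_conj_mul, h⟩
    · refine ⟨(starRingEnd ℂ) τ, ?_, h⟩
      rw [Complex.conj_conj, mul_comm]
      exact tau_conj_mul
  -- gradient transformation
  have hgrad : ∀ x, grad w (Rm⁻¹.mulVec x) = μ • Rc⁻¹.mulVec (grad w x) := by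
    intro x
    have h1 : grad (fun y => w (Rm⁻¹.mulVec y)) x = Rc.mulVec (grad w (Rm⁻¹.mulVec x)) :=
      grad_comp w hw x
    have h2 : (fun y => w (Rm⁻¹.mulVec y)) = fun y => μ * w y := funext hwμ
    rw [h2, grad_const_mul μ w hw x] at h1
    have h3 := congrArg (Rc⁻¹.mulVec) h1.symm
    rwa [Matrix.mulVec_mulVec, Rc_inv_mul, Matrix.one_mulVec, Matrix.mulVec_smul] at h3
  -- pointwise identity
  have hkey : ∀ x, F (Rm⁻¹.mulVec x) = Rc⁻¹.mulVec (F x) := by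
    intro x
    have hc : conj (w (Rm⁻¹.mulVec x)) = (starRingEnd ℂ) μ * conj (w x) := by
      rw [hwμ, map_mul]
    rw [hF]
    simp only [hc, hAsym, hgrad]
    rw [Matrix.mulVec_smul, Matrix.mulVec_mulVec, mul_assoc (Rc⁻¹ * A x), Rc_mul_inv,
      mul_one, ← Matrix.mulVec_mulVec, Matrix.mulVec_smul (Rc⁻¹), smul_smul]
    congr 1
    linear_combination (starRingEnd ℂ) (w x) * hμ
  -- set is invariant
  have hpre : (fun x => Rm⁻¹.mulVec x) ⁻¹' E = E := by
    ext x
    have h1 : Rm.mulVec (Rm⁻¹.mulVec x) ∈ E ↔ Rm⁻¹.mulVec x ∈ E :=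
      Set.ext_iff.mp hER (Rm⁻¹.mulVec x)
    rw [Matrix.mulVec_mulVec, Rm_mul_inv, Matrix.one_mulVec] at h1
    exact ⟨fun h => h1.mpr h, fun h => h1.mp h⟩
  -- change of variables
  have hCOV : (∫ x in E, F (Rm⁻¹.mulVec x)) = ∫ x in E, F x := by
    have hemb : MeasurableEmbedding (fun x : Fin 2 → ℝ => Rm⁻¹.mulVec x) :=
      eqv.measurableEmbedding
    have := mp.setIntegral_preimage_emb hemb F E
    rwa [hpre] at this
  -- continuous linear map
  set L : (Fin 2 → ℂ) →L[ℂ] (Fin 2 → ℂ) :=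
    LinearMap.toContinuousLinearMap (Matrix.mulVecLin Rc⁻¹) with hL
  have hLapp : ∀ v, L v = Rc⁻¹.mulVec v := fun v => rfl
  set I : Fin 2 → ℂ := ∫ x in E, F x with hI
  have hfix : Rc⁻¹.mulVec I = I := by
    have h1 : (∫ x in E, F (Rm⁻¹.mulVec x)) = ∫ x in E, L (F x) := by
      congr 1; funext x; rw [hkey x, hLapp]
    have h2 : (∫ x in E, L (F x)) = L I := L.integral_comp_comm hint
    rw [← hLapp, ← h2, ← h1, hCOV]
  have h2 : Rc.mulVec I = I := by
    conv_lhs => rw [← hfix]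
    rw [Matrix.mulVec_mulVec, Rc_mul_inv, Matrix.one_mulVec]
  set B : Matrix (Fin 2) (Fin 2) ℂ := Rc - 1 with hB
  have hBmul : B.mulVec I = 0 := by
    rw [hB, Matrix.sub_mulVec, h2, Matrix.one_mulVec, sub_self]
  have hBdet : B.det = 3 := by
    have h3 : ((Real.sqrt 3 : ℝ) : ℂ) * ((Real.sqrt 3 : ℝ) : ℂ) = 3 := by
      rw [← Complex.ofReal_mul, sqrt3_sq]; norm_num
    simp only [hB, Matrix.det_fin_two, Matrix.sub_apply, Matrix.one_apply, Rc, Rm,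
      Matrix.map_apply]
    norm_num [Matrix.cons_val_zero, Matrix.cons_val_one]
    push_cast
    linear_combination (1/4 : ℂ) * h3
  have hBunit : IsUnit B.det := by rw [hBdet]; exact isUnit_iff_ne_zero.mpr (by norm_num)
  have : (B⁻¹ * B).mulVec I = I := by
    rw [Matrix.nonsing_inv_mul _ hBunit, Matrix.one_mulVec]
  rw [hI] at this ⊢
  rw [← this, ← Matrix.mulVec_mulVec, hBmul, Matrix.mulVec_zero]
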